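/- Let λ_k = (1+|k|)^{−1} log^{−2β}(e+|k|), β > 1/2, and for j ∈ ℤ set γ_j = 1 + ∫₀¹ ((1−log h)^{2β}/h²)·|e^{2πijh}−1|² dh. Then γ_j ≍ 1/λ_j uniformly in j ∈ ℤ, i.e., there are constants c,C > 0 independent of j with c/λ_j ≤ γ_j ≤ C/λ_j. -/

import Mathlib

open MeasureTheory

section helpers

lemma poly_le_exp_half (β : ℝ) : ∃ C : ℝ, 1 ≤ C ∧ ∀ t : ℝ, 0 ≤ t →
    (1 + t) ^ (2 * β) ≤ C * Real.exp (t / 2) := by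
  set n : ℕ := ⌈2 * β⌉₊ + 1 with hn
  have h1n : (1 : ℝ) ≤ n := by
    have : 1 ≤ n := Nat.le_add_left 1 _
    exact_mod_cast this
  refine ⟨(2 * n) ^ n, one_le_pow₀ (by linarith), fun t ht => ?_⟩
  have h1t : (1 : ℝ) ≤ 1 + t := by linarith
  have h2b : 2 * β ≤ (n : ℝ) := by
    have := Nat.le_ceil (2 * β)
    push_cast [hn]; linarith
  have hnpos : (0 : ℝ) < n := by linarith
  have step1 : (1 + t) ^ (2 * β) ≤ (1 + t) ^ (n : ℕ) := by
    calc (1 + t) ^ (2 * β) ≤ (1 + t) ^ ((n : ℝ)) :=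
          Real.rpow_le_rpow_of_exponent_le h1t h2b
      _ = (1 + t) ^ (n : ℕ) := Real.rpow_natCast _ n
  have step2 : 1 + t ≤ 2 * n * Real.exp (t / (2 * n)) := by
    have h := Real.add_one_le_exp (t / (2 * n))
    have expand : 2 * (n:ℝ) * (1 + t / (2 * n)) = 2 * n + t := by
      field_simp
    nlinarith [Real.exp_pos (t / (2 * n))]
  have step3 : (1 + t) ^ (n : ℕ) ≤ (2 * n * Real.exp (t / (2 * n))) ^ (n : ℕ) :=
    pow_le_pow_left₀ (by linarith) step2 n
  have step4 : (2 * (n:ℝ) * Real.exp (t / (2 * n))) ^ (n : ℕ)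
      = (2 * n) ^ (n:ℕ) * Real.exp (t / 2) := by
    rw [mul_pow, ← Real.exp_nat_mul]
    congr 1
    field_simp
  calc (1 + t) ^ (2*β) ≤ (1 + t) ^ (n:ℕ) := step1
    _ ≤ _ := step3
    _ = _ := step4

lemma abs_exp_sub_one_sq (x : ℝ) :
    (‖Complex.exp (2 * Real.pi * Complex.I * (x:ℂ)) - 1‖) ^ 2
      = 2 - 2 * Real.cos (2 * Real.pi * x) := by
  have harg : (2 : ℂ) * Real.pi * Complex.I * (x:ℂ) = ((2 * Real.pi * x : ℝ) : ℂ) * Complex.I := by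
    push_cast; ring
  rw [harg, Complex.exp_mul_I]
  rw [← Complex.ofReal_cos, ← Complex.ofReal_sin]
  rw [Complex.sq_norm, Complex.normSq_apply]
  simp only [Complex.sub_re, Complex.add_re, Complex.mul_re, Complex.ofReal_re,
    Complex.ofReal_im, Complex.I_re, Complex.I_im, Complex.one_re, Complex.one_im,
    Complex.sub_im, Complex.add_im, Complex.mul_im]
  nlinarith [Real.sin_sq_add_cos_sq (2 * Real.pi * x)]

noncomputable def Ff (β : ℝ) (j : ℤ) (h : ℝ) : ℝ :=
  ((1 - Real.log h) ^ (2 * β) / h ^ 2) *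
    (‖Complex.exp (2 * Real.pi * Complex.I * (((j : ℝ) * h : ℝ) : ℂ)) - 1‖) ^ 2

lemma Ff_eq (β : ℝ) (j : ℤ) (h : ℝ) :
    Ff β j h = ((1 - Real.log h) ^ (2 * β) / h ^ 2) *
      (2 - 2 * Real.cos (2 * Real.pi * ((j:ℝ) * h))) := by
  rw [Ff, abs_exp_sub_one_sq]

lemma two_sub_cos_nonneg (θ : ℝ) : 0 ≤ 2 - 2 * Real.cos θ := by
  nlinarith [Real.cos_le_one θ]

lemma two_sub_cos_le_sq (θ : ℝ) : 2 - 2 * Real.cos θ ≤ θ ^ 2 := by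
  nlinarith [Real.one_sub_sq_div_two_le_cos (x := θ)]

lemma Ff_nonneg (β : ℝ) (j : ℤ) (h : ℝ) (hh : 0 < h) (hh1 : h < 1) : 0 ≤ Ff β j h := by
  rw [Ff_eq]
  have h1 : (0:ℝ) < 1 - Real.log h := by
    have := Real.log_neg hh hh1; linarith
  have : (0:ℝ) ≤ (1 - Real.log h) ^ (2*β) := Real.rpow_nonneg h1.le _
  have := two_sub_cos_nonneg (2 * Real.pi * ((j:ℝ) * h))
  positivity

lemma Ff_le (β : ℝ) (j : ℤ) (h : ℝ) (hh : 0 < h) (hh1 : h < 1) :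
    Ff β j h ≤ 4 * Real.pi ^ 2 * (j:ℝ) ^ 2 * (1 - Real.log h) ^ (2 * β) := by
  rw [Ff_eq]
  have h1 : (0:ℝ) < 1 - Real.log h := by
    have := Real.log_neg hh hh1; linarith
  have hw : (0:ℝ) ≤ (1 - Real.log h) ^ (2*β) := Real.rpow_nonneg h1.le _
  have hb := two_sub_cos_le_sq (2 * Real.pi * ((j:ℝ) * h))
  have hsq : (2 * Real.pi * ((j:ℝ) * h)) ^ 2 = 4 * Real.pi ^ 2 * (j:ℝ)^2 * h^2 := by ring
  calc ((1 - Real.log h) ^ (2*β) / h^2) * (2 - 2 * Real.cos (2 * Real.pi * ((j:ℝ)*h)))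
      ≤ ((1 - Real.log h) ^ (2*β) / h^2) * (4 * Real.pi ^ 2 * (j:ℝ)^2 * h^2) := by
        apply mul_le_mul_of_nonneg_left _ (by positivity)
        rw [← hsq]; exact hb
    _ = 4 * Real.pi ^ 2 * (j:ℝ)^2 * (1 - Real.log h) ^ (2*β) := by
        field_simp

lemma weight_bound (β C : ℝ) (hβ : 0 ≤ 2 * β)
    (hC : ∀ t : ℝ, 0 ≤ t → (1 + t) ^ (2 * β) ≤ C * Real.exp (t / 2))
    (a : ℝ) (ha : 0 < a) (ha1 : a ≤ 1) (h : ℝ) (hh : 0 < h) (hha : h ≤ a) :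
    (1 - Real.log h) ^ (2 * β) ≤
      C * (1 - Real.log a) ^ (2 * β) * (a ^ ((1:ℝ)/2) * h ^ (-((1:ℝ)/2))) := by
  set t := Real.log a - Real.log h with htdef
  have hlh : Real.log h ≤ Real.log a := Real.log_le_log hh hha
  have ht : 0 ≤ t := by simp [htdef]; linarith
  have hla : Real.log a ≤ 0 := Real.log_nonpos ha.le ha1
  have hbase : (0:ℝ) ≤ 1 - Real.log h := by linarith
  have key : 1 - Real.log h ≤ (1 - Real.log a) * (1 + t) := by nlinarith
  have hbase2 : (0:ℝ) ≤ 1 - Real.log a := by linarith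
  have step1 : (1 - Real.log h) ^ (2*β) ≤ ((1 - Real.log a) * (1 + t)) ^ (2*β) :=
    Real.rpow_le_rpow hbase key hβ
  have step2 : ((1 - Real.log a) * (1 + t)) ^ (2*β)
      = (1 - Real.log a) ^ (2*β) * (1 + t) ^ (2*β) :=
    Real.mul_rpow hbase2 (by linarith)
  have step3 : (1 + t) ^ (2*β) ≤ C * Real.exp (t / 2) := hC t ht
  have hexp : Real.exp (t / 2) = a ^ ((1:ℝ)/2) * h ^ (-((1:ℝ)/2)) := by
    rw [Real.rpow_def_of_pos ha, Real.rpow_def_of_pos hh, ← Real.exp_add]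
    congr 1
    rw [htdef]; ring
  have hwa : (0:ℝ) ≤ (1 - Real.log a) ^ (2*β) := Real.rpow_nonneg hbase2 _
  calc (1 - Real.log h) ^ (2*β) ≤ (1 - Real.log a) ^ (2*β) * (1 + t) ^ (2*β) := by
        rw [← step2]; exact step1
    _ ≤ (1 - Real.log a) ^ (2*β) * (C * Real.exp (t/2)) :=
        mul_le_mul_of_nonneg_left step3 hwa
    _ = C * (1 - Real.log a) ^ (2*β) * (a ^ ((1:ℝ)/2) * h ^ (-((1:ℝ)/2))) := by
        rw [hexp]; ring

lemma contF (β : ℝ) (j : ℤ) : ContinuousOn (Ff β j) (Set.Ioo (0:ℝ) 1) := by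
  apply ContinuousOn.mul
  · apply ContinuousOn.div
    · apply ContinuousOn.rpow_const
      · exact (continuousOn_const.sub (Real.continuousOn_log.mono (by
          intro x hx; simp; exact ne_of_gt hx.1)))
      · intro x hx
        left
        have hl : Real.log x < 0 := Real.log_neg hx.1 hx.2
        have : (0:ℝ) < 1 - Real.log x := by linarith
        exact ne_of_gt this
    · exact (continuous_pow 2).continuousOn
    · intro x hx; exact pow_ne_zero 2 (ne_of_gt hx.1)
  · apply Continuous.continuousOn
    apply Continuous.pow
    apply continuous_norm.comp
    apply Continuous.sub _ continuous_const
    apply Complex.continuous_exp.comp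
    continuity

lemma int_rpow_half (a : ℝ) (ha : 0 ≤ a) :
    ∫ h in Set.Ioc (0:ℝ) a, h ^ (-((1:ℝ)/2)) = 2 * a ^ ((1:ℝ)/2) := by
  rw [← intervalIntegral.integral_of_le ha]
  rw [integral_rpow (Or.inl (by norm_num))]
  rw [Real.zero_rpow (by norm_num)]
  norm_num
  ring_nf

lemma int_rpow_two (a : ℝ) (ha : 0 < a) (ha1 : a ≤ 1) :
    ∫ h in Set.Ioo a (1:ℝ), h ^ (-(2:ℝ)) = a⁻¹ - 1 := by
  rw [← integral_Ioc_eq_integral_Ioo, ← intervalIntegral.integral_of_le ha1]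
  rw [integral_rpow (Or.inr ⟨by norm_num, by
    rw [Set.uIcc_of_le ha1]; intro hmem; exact absurd hmem.1 (by linarith)⟩)]
  norm_num [Real.rpow_neg_one]
  ring

lemma integrable_rpow_half (a : ℝ) (ha : 0 ≤ a) (K : ℝ) :
    IntegrableOn (fun h : ℝ => K * h ^ (-((1:ℝ)/2))) (Set.Ioc 0 a) := by
  apply Integrable.const_mul
  exact (intervalIntegrable_iff_integrableOn_Ioc_of_le ha).mp
    (intervalIntegral.intervalIntegrable_rpow' (by norm_num))

lemma integrableOn_Ff (β C : ℝ) (hβ : 0 ≤ 2 * β) (hC0 : 0 ≤ C)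
    (hC : ∀ t : ℝ, 0 ≤ t → (1 + t) ^ (2 * β) ≤ C * Real.exp (t / 2)) (j : ℤ) :
    IntegrableOn (Ff β j) (Set.Ioo (0:ℝ) 1) := by
  apply Integrable.mono' (g := fun h : ℝ => (4 * Real.pi^2 * (j:ℝ)^2 * C) * h ^ (-((1:ℝ)/2)))
  · exact (integrable_rpow_half 1 one_pos.le _).mono_set Set.Ioo_subset_Ioc_self
  · exact (contF β j).aestronglyMeasurable measurableSet_Ioo
  · rw [ae_restrict_iff' measurableSet_Ioo]
    filter_upwards with h hmem
    rw [Real.norm_of_nonneg (Ff_nonneg β j h hmem.1 hmem.2)]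
    have h1 := Ff_le β j h hmem.1 hmem.2
    have h2 := weight_bound β C hβ hC 1 one_pos le_rfl h hmem.1 hmem.2.le
    simp only [Real.log_one, sub_zero, Real.one_rpow, one_mul, mul_one] at h2
    calc Ff β j h ≤ 4 * Real.pi^2 * (j:ℝ)^2 * (1 - Real.log h) ^ (2*β) := h1
      _ ≤ 4 * Real.pi^2 * (j:ℝ)^2 * (C * h ^ (-((1:ℝ)/2))) := by
          apply mul_le_mul_of_nonneg_left h2 (by positivity)
      _ = (4 * Real.pi^2 * (j:ℝ)^2 * C) * h ^ (-((1:ℝ)/2)) := by ring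

end helpers

section main
variable (β C : ℝ)

lemma lower_est (hβ2 : 0 ≤ 2 * β) (hC0 : 0 ≤ C)
    (hC : ∀ t : ℝ, 0 ≤ t → (1 + t) ^ (2 * β) ≤ C * Real.exp (t / 2))
    (j : ℤ) (hj : j ≠ 0) :
    (1 + |(j:ℝ)|) * Real.log (Real.exp 1 + |(j:ℝ)|) ^ (2 * β)
      ≤ 1 + ∫ h in Set.Ioo (0:ℝ) 1, Ff β j h := by
  set m := |(j:ℝ)| with hmdef
  have hm : 1 ≤ m := by
    have h1 : (1:ℤ) ≤ |j| := Int.one_le_abs hj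
    have : ((1:ℤ):ℝ) ≤ ((|j|:ℤ):ℝ) := by exact_mod_cast h1
    rw [hmdef, ← Int.cast_abs]
    exact_mod_cast this
  have hm0 : 0 < m := by linarith
  set L := Real.log (Real.exp 1 + m) with hLdef
  have hL1 : 1 ≤ L := by
    rw [hLdef]
    calc (1:ℝ) = Real.log (Real.exp 1) := (Real.log_exp 1).symm
      _ ≤ _ := Real.log_le_log (Real.exp_pos 1) (by linarith)
  have hLpow : (0:ℝ) ≤ L ^ (2*β) := Real.rpow_nonneg (by linarith) _
  have he2 : (2:ℝ) ≤ Real.exp 1 := by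
    have := Real.add_one_le_exp 1; linarith
  set S := Set.Ioo (1/(4*m)) (1/(2*m)) with hSdef
  have hS : S ⊆ Set.Ioo (0:ℝ) 1 := by
    intro x hx
    obtain ⟨hx1, hx2⟩ := hx
    constructor
    · have : (0:ℝ) < 1/(4*m) := by positivity
      linarith
    · have h12 : 1/(2*m) ≤ 1/2 := by
        rw [div_le_div_iff₀ (by linarith) (by norm_num)]; linarith
      linarith
  have hint := integrableOn_Ff β C hβ2 hC0 hC j
  have hLle : ∀ h : ℝ, 0 < h → h < 1/(2*m) → L ≤ 1 - Real.log h := by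
    intro h hh0 hh2
    have hlog : Real.log h < Real.log (1/(2*m)) := Real.log_lt_log hh0 hh2
    have hlog2 : Real.log (1/(2*m)) = -Real.log (2*m) := by
      rw [one_div, Real.log_inv]
    have hLle2 : L ≤ 1 + Real.log (2*m) := by
      rw [hLdef]
      have heq : Real.exp 1 * (2*m) > 0 := by positivity
      have : Real.log (Real.exp 1 + m) ≤ Real.log (Real.exp 1 * (2*m)) := by
        apply Real.log_le_log (by positivity)
        nlinarith
      rwa [Real.log_mul (by positivity) (by positivity), Real.log_exp] at this
    linarith
  have hlow : ∀ h ∈ S, 8 * m^2 * L^(2*β) ≤ Ff β j h := by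
    intro h hh
    obtain ⟨hh1, hh2⟩ := hh
    have hh0 : 0 < h := lt_trans (by positivity) hh1
    rw [Ff_eq]
    have hcos : Real.cos (2 * Real.pi * ((j:ℝ) * h)) ≤ 0 := by
      have habs : Real.cos (2*Real.pi*((j:ℝ)*h)) = Real.cos (2*Real.pi*(m*h)) := by
        rw [hmdef]
        rcases abs_cases ((j:ℝ)) with ⟨h1,_⟩|⟨h1,_⟩
        · rw [h1]
        · rw [h1, show 2*Real.pi*(-(j:ℝ)*h) = -(2*Real.pi*((j:ℝ)*h)) by ring, Real.cos_neg]
      rw [habs]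
      apply Real.cos_nonpos_of_pi_div_two_le_of_le
      · have hmh : 1/4 < m * h := by
          rw [div_lt_iff₀ (by positivity)] at hh1
          nlinarith
        nlinarith [Real.pi_pos]
      · have hmh : m * h < 1/2 := by
          rw [lt_div_iff₀ (by positivity)] at hh2
          nlinarith
        nlinarith [Real.pi_pos]
    have h2c : (2:ℝ) ≤ 2 - 2 * Real.cos (2 * Real.pi * ((j:ℝ) * h)) := by linarith
    have hLh : L ≤ 1 - Real.log h := hLle h hh0 hh2
    have hrp : L ^ (2*β) ≤ (1 - Real.log h) ^ (2*β) :=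
      Real.rpow_le_rpow (by linarith) hLh hβ2
    have hh2' : h^2 * (4*m^2) ≤ 1 := by
      rw [lt_div_iff₀ (by positivity)] at hh2
      have ht1 : 0 < 1 - h*(2*m) := by linarith
      have ht2 : 0 < 1 + h*(2*m) := by positivity
      nlinarith [mul_pos ht1 ht2]
    have hw : L^(2*β) * (4*m^2) ≤ (1 - Real.log h)^(2*β) / h^2 := by
      rw [le_div_iff₀ (by positivity)]
      calc L^(2*β) * (4*m^2) * h^2 = L^(2*β) * (h^2 * (4*m^2)) := by ring
        _ ≤ L^(2*β) * 1 := by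
            apply mul_le_mul_of_nonneg_left hh2' hLpow
        _ = L^(2*β) := mul_one _
        _ ≤ (1 - Real.log h)^(2*β) := hrp
    calc 8 * m^2 * L^(2*β) = (L^(2*β) * (4*m^2)) * 2 := by ring
      _ ≤ ((1 - Real.log h)^(2*β) / h^2) * (2 - 2 * Real.cos (2 * Real.pi * ((j:ℝ) * h))) := by
          apply mul_le_mul hw h2c (by norm_num)
          have hnn : (0:ℝ) ≤ (1 - Real.log h)^(2*β) :=
            Real.rpow_nonneg (by linarith) _
          positivity
  have hae : 0 ≤ᵐ[volume.restrict (Set.Ioo (0:ℝ) 1)] Ff β j := by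
    rw [Filter.EventuallyLE, ae_restrict_iff' measurableSet_Ioo]
    exact ae_of_all _ fun h hmem => Ff_nonneg β j h hmem.1 hmem.2
  have hmono : ∫ h in S, Ff β j h ≤ ∫ h in Set.Ioo (0:ℝ) 1, Ff β j h :=
    setIntegral_mono_set hint hae (HasSubset.Subset.eventuallyLE hS)
  have hconst : ∫ _ in S, (8 * m^2 * L^(2*β)) ≤ ∫ h in S, Ff β j h := by
    apply setIntegral_mono_on
    · exact integrableOn_const measure_Ioo_lt_top.ne
    · exact hint.mono_set hS
    · exact measurableSet_Ioo
    · exact hlow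
  have hvol : ∫ _ in S, (8 * m^2 * L^(2*β)) = 2 * m * L^(2*β) := by
    rw [setIntegral_const, hSdef, Real.volume_real_Ioo, smul_eq_mul,
      max_eq_left (by
        rw [sub_nonneg, div_le_div_iff₀ (by positivity) (by positivity)]; nlinarith)]
    field_simp
    ring
  have hfinal : (1 + m) * L^(2*β) ≤ 2 * m * L^(2*β) := by
    apply mul_le_mul_of_nonneg_right (by linarith) hLpow
  have h1int : (0:ℝ) ≤ 1 := zero_le_one
  calc (1 + m) * L^(2*β) ≤ 2 * m * L^(2*β) := hfinal
    _ = ∫ _ in S, (8 * m^2 * L^(2*β)) := hvol.symm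
    _ ≤ ∫ h in S, Ff β j h := hconst
    _ ≤ ∫ h in Set.Ioo (0:ℝ) 1, Ff β j h := hmono
    _ ≤ 1 + ∫ h in Set.Ioo (0:ℝ) 1, Ff β j h := by linarith

lemma upper_est (hβ2 : 0 ≤ 2 * β) (hC0 : 0 ≤ C)
    (hC : ∀ t : ℝ, 0 ≤ t → (1 + t) ^ (2 * β) ≤ C * Real.exp (t / 2))
    (j : ℤ) (hj : j ≠ 0) :
    (∫ h in Set.Ioo (0:ℝ) 1, Ff β j h) ≤ (4 * Real.pi^2 * C + 8) * 2 ^ (2*β) *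
      (|(j:ℝ)| * Real.log (Real.exp 1 + |(j:ℝ)|) ^ (2 * β)) := by
  set m := |(j:ℝ)| with hmdef
  have hm : 1 ≤ m := by
    have h1 : (1:ℤ) ≤ |j| := Int.one_le_abs hj
    have : ((1:ℤ):ℝ) ≤ ((|j|:ℤ):ℝ) := by exact_mod_cast h1
    rw [hmdef, ← Int.cast_abs]
    exact_mod_cast this
  have hm0 : 0 < m := by linarith
  set L := Real.log (Real.exp 1 + m) with hLdef
  have hL1 : 1 ≤ L := by
    rw [hLdef]
    calc (1:ℝ) = Real.log (Real.exp 1) := (Real.log_exp 1).symm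
      _ ≤ _ := Real.log_le_log (Real.exp_pos 1) (by linarith)
  have hLpow : (0:ℝ) ≤ L ^ (2*β) := Real.rpow_nonneg (by linarith) _
  have he2 : (2:ℝ) ≤ Real.exp 1 := by
    have := Real.add_one_le_exp 1; linarith
  set a := 1/(2*m) with hadef
  have ha0 : 0 < a := by positivity
  have ha1 : a ≤ 1/2 := by
    rw [hadef, div_le_div_iff₀ (by positivity) (by norm_num)]; linarith
  have hloga : Real.log a = -Real.log (2*m) := by
    rw [hadef, one_div, Real.log_inv]
  have hlogapos : 0 ≤ 1 - Real.log a := by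
    have : Real.log a ≤ 0 := Real.log_nonpos ha0.le (by linarith)
    linarith
  have h1loga : 1 - Real.log a ≤ 2 * L := by
    rw [hloga]
    have step : Real.log (Real.exp 1 * (2*m)) ≤ Real.log ((Real.exp 1 + m)^2) := by
      apply Real.log_le_log (by positivity)
      nlinarith
    rw [Real.log_mul (by positivity) (by positivity), Real.log_exp, Real.log_pow] at step
    push_cast at step
    rw [hLdef]; linarith
  have h2L : (1 - Real.log a) ^ (2*β) ≤ 2^(2*β) * L^(2*β) := by
    calc (1 - Real.log a) ^ (2*β) ≤ (2*L) ^ (2*β) :=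
          Real.rpow_le_rpow hlogapos h1loga hβ2
      _ = 2^(2*β) * L^(2*β) := Real.mul_rpow (by norm_num) (by linarith)
  have hja : (j:ℝ)^2 = m^2 := (sq_abs _).symm
  -- split the integral
  have hunion : Set.Ioc (0:ℝ) a ∪ Set.Ioo a 1 = Set.Ioo (0:ℝ) 1 :=
    Set.Ioc_union_Ioo_eq_Ioo ha0.le (by linarith)
  have hdisj : Disjoint (Set.Ioc (0:ℝ) a) (Set.Ioo a 1) := by
    rw [Set.disjoint_left]
    rintro x ⟨_, hx2⟩ ⟨hx3, _⟩
    exact absurd hx3 (not_lt.mpr hx2)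
  have hint := integrableOn_Ff β C hβ2 hC0 hC j
  have hint1 : IntegrableOn (Ff β j) (Set.Ioc (0:ℝ) a) := by
    apply hint.mono_set; rw [← hunion]; exact Set.subset_union_left
  have hint2 : IntegrableOn (Ff β j) (Set.Ioo a (1:ℝ)) := by
    apply hint.mono_set; rw [← hunion]; exact Set.subset_union_right
  have hsplit : ∫ h in Set.Ioo (0:ℝ) 1, Ff β j h
      = (∫ h in Set.Ioc (0:ℝ) a, Ff β j h) + ∫ h in Set.Ioo a (1:ℝ), Ff β j h := by
    rw [← hunion, setIntegral_union hdisj measurableSet_Ioo hint1 hint2]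
  -- first piece
  set K := 4 * Real.pi^2 * m^2 * C * (1 - Real.log a)^(2*β) * a^((1:ℝ)/2) with hKdef
  have hb1 : ∀ h ∈ Set.Ioc (0:ℝ) a, Ff β j h ≤ K * h ^ (-((1:ℝ)/2)) := by
    intro h hh
    obtain ⟨hh0, hha⟩ := hh
    have hh1 : h < 1 := by linarith
    have s1 := Ff_le β j h hh0 hh1
    have s2 := weight_bound β C hβ2 hC a ha0 (by linarith) h hh0 hha
    calc Ff β j h ≤ 4 * Real.pi^2 * (j:ℝ)^2 * (1 - Real.log h)^(2*β) := s1
      _ ≤ 4 * Real.pi^2 * (j:ℝ)^2 *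
          (C * (1 - Real.log a)^(2*β) * (a^((1:ℝ)/2) * h^(-((1:ℝ)/2)))) := by
          apply mul_le_mul_of_nonneg_left s2 (by positivity)
      _ = K * h ^ (-((1:ℝ)/2)) := by rw [hKdef, hja]; ring
  have hI1 : (∫ h in Set.Ioc (0:ℝ) a, Ff β j h) ≤ K * (2 * a^((1:ℝ)/2)) := by
    calc (∫ h in Set.Ioc (0:ℝ) a, Ff β j h)
        ≤ ∫ h in Set.Ioc (0:ℝ) a, K * h ^ (-((1:ℝ)/2)) :=
          setIntegral_mono_on hint1 (integrable_rpow_half a ha0.le K) measurableSet_Ioc hb1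
      _ = K * ∫ h in Set.Ioc (0:ℝ) a, h ^ (-((1:ℝ)/2)) := integral_const_mul K _
      _ = K * (2 * a^((1:ℝ)/2)) := by rw [int_rpow_half a ha0.le]
  have haa : a^((1:ℝ)/2) * a^((1:ℝ)/2) = a := by
    rw [← Real.rpow_add ha0]; norm_num
  have hI1' : (∫ h in Set.Ioc (0:ℝ) a, Ff β j h)
      ≤ 4 * Real.pi^2 * C * m * (1 - Real.log a)^(2*β) := by
    have e1 : K * (2 * a^((1:ℝ)/2))
        = 8 * Real.pi^2 * C * (1 - Real.log a)^(2*β) * (m^2 * (a^((1:ℝ)/2) * a^((1:ℝ)/2))) := by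
      rw [hKdef]; ring
    have e2 : m^2 * (a^((1:ℝ)/2) * a^((1:ℝ)/2)) = m / 2 := by
      rw [haa, hadef]; field_simp
    calc (∫ h in Set.Ioc (0:ℝ) a, Ff β j h) ≤ K * (2 * a^((1:ℝ)/2)) := hI1
      _ = 8 * Real.pi^2 * C * (1 - Real.log a)^(2*β) * (m/2) := by rw [e1, e2]
      _ = 4 * Real.pi^2 * C * m * (1 - Real.log a)^(2*β) := by ring
  -- second piece
  have hb2 : ∀ h ∈ Set.Ioo a (1:ℝ), Ff β j h ≤ (4 * (1 - Real.log a)^(2*β)) * h ^ (-(2:ℝ)) := by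
    intro h hh
    obtain ⟨hha, hh1⟩ := hh
    have hh0 : 0 < h := lt_trans ha0 hha
    have hlh : Real.log a ≤ Real.log h := Real.log_le_log ha0 hha.le
    have hlhpos : (0:ℝ) ≤ 1 - Real.log h := by
      have : Real.log h < 0 := Real.log_neg hh0 hh1
      linarith
    have hrp : (1 - Real.log h)^(2*β) ≤ (1 - Real.log a)^(2*β) :=
      Real.rpow_le_rpow hlhpos (by linarith) hβ2
    have hcos : (2:ℝ) - 2 * Real.cos (2 * Real.pi * ((j:ℝ) * h)) ≤ 4 := by
      nlinarith [Real.neg_one_le_cos (2 * Real.pi * ((j:ℝ) * h))]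
    have e1 : h ^ (-(2:ℝ)) = (h^2)⁻¹ := by
      rw [Real.rpow_neg hh0.le]
      norm_num
    rw [Ff_eq, e1]
    have hnn : (0:ℝ) ≤ (1 - Real.log h)^(2*β) := Real.rpow_nonneg hlhpos _
    have hnn2 : (0:ℝ) ≤ (1 - Real.log a)^(2*β) := Real.rpow_nonneg hlogapos _
    calc ((1 - Real.log h)^(2*β) / h^2) * (2 - 2 * Real.cos (2 * Real.pi * ((j:ℝ) * h)))
        ≤ ((1 - Real.log a)^(2*β) / h^2) * 4 := by
          apply mul_le_mul _ hcos (two_sub_cos_nonneg _) (by positivity)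
          apply div_le_div_of_nonneg_right hrp (by positivity)
      _ = (4 * (1 - Real.log a)^(2*β)) * (h^2)⁻¹ := by ring
  have hintg2 : IntegrableOn (fun h : ℝ => (4 * (1 - Real.log a)^(2*β)) * h ^ (-(2:ℝ)))
      (Set.Ioo a (1:ℝ)) := by
    apply Integrable.const_mul
    apply (intervalIntegrable_iff_integrableOn_Ioo_of_le (by linarith)).mp
    apply intervalIntegral.intervalIntegrable_rpow
    right
    rw [Set.uIcc_of_le (by linarith)]
    intro hmem
    exact absurd hmem.1 (by linarith)
  have hI2 : (∫ h in Set.Ioo a (1:ℝ), Ff β j h) ≤ 8 * m * (1 - Real.log a)^(2*β) := by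
    have hnn2 : (0:ℝ) ≤ (1 - Real.log a)^(2*β) := Real.rpow_nonneg hlogapos _
    have hainv : a⁻¹ = 2*m := by rw [hadef, one_div, inv_inv]
    calc (∫ h in Set.Ioo a (1:ℝ), Ff β j h)
        ≤ ∫ h in Set.Ioo a (1:ℝ), (4 * (1 - Real.log a)^(2*β)) * h ^ (-(2:ℝ)) :=
          setIntegral_mono_on hint2 hintg2 measurableSet_Ioo hb2
      _ = (4 * (1 - Real.log a)^(2*β)) * ∫ h in Set.Ioo a (1:ℝ), h ^ (-(2:ℝ)) :=
          integral_const_mul _ _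
      _ = (4 * (1 - Real.log a)^(2*β)) * (a⁻¹ - 1) := by
          rw [int_rpow_two a ha0 (by linarith)]
      _ ≤ (4 * (1 - Real.log a)^(2*β)) * (2*m) := by
          apply mul_le_mul_of_nonneg_left _ (by positivity)
          rw [hainv]; linarith
      _ = 8 * m * (1 - Real.log a)^(2*β) := by ring
  -- combine
  rw [hsplit]
  have htot : (4 * Real.pi^2 * C * m + 8 * m) * (1 - Real.log a)^(2*β)
      ≤ (4 * Real.pi^2 * C * m + 8 * m) * (2^(2*β) * L^(2*β)) := by
    apply mul_le_mul_of_nonneg_left h2L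
    have h4 : (0:ℝ) ≤ 4 * Real.pi^2 * C * m :=
      mul_nonneg (mul_nonneg (mul_nonneg (by norm_num) (sq_nonneg Real.pi)) hC0) hm0.le
    linarith
  calc (∫ h in Set.Ioc (0:ℝ) a, Ff β j h) + ∫ h in Set.Ioo a (1:ℝ), Ff β j h
      ≤ 4 * Real.pi^2 * C * m * (1 - Real.log a)^(2*β) + 8 * m * (1 - Real.log a)^(2*β) :=
        add_le_add hI1' hI2
    _ = (4 * Real.pi^2 * C * m + 8 * m) * (1 - Real.log a)^(2*β) := by ring
    _ ≤ (4 * Real.pi^2 * C * m + 8 * m) * (2^(2*β) * L^(2*β)) := htot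
    _ = (4 * Real.pi^2 * C + 8) * 2^(2*β) * (m * L^(2*β)) := by ring

end main

theorem gamma_equiv_inv_lambda (β : ℝ) (hβ : 1 / 2 < β) :
    ∃ c C : ℝ, 0 < c ∧ 0 < C ∧ ∀ j : ℤ,
      c / ((1 + |(j : ℝ)|)⁻¹ * Real.log (Real.exp 1 + |(j : ℝ)|) ^ (-(2 * β))) ≤
          (1 + ∫ h in Set.Ioo (0 : ℝ) 1, ((1 - Real.log h) ^ (2 * β) / h ^ 2) *
            (‖Complex.exp (2 * Real.pi * Complex.I * (((j : ℝ) * h : ℝ) : ℂ)) - 1‖) ^ 2) ∧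
        (1 + ∫ h in Set.Ioo (0 : ℝ) 1, ((1 - Real.log h) ^ (2 * β) / h ^ 2) *
            (‖Complex.exp (2 * Real.pi * Complex.I * (((j : ℝ) * h : ℝ) : ℂ)) - 1‖) ^ 2) ≤
          C / ((1 + |(j : ℝ)|)⁻¹ * Real.log (Real.exp 1 + |(j : ℝ)|) ^ (-(2 * β))) := by
  obtain ⟨C₀, hC01, hC0⟩ := poly_le_exp_half β
  have hβ2 : 0 ≤ 2 * β := by linarith
  have hC0nn : (0:ℝ) ≤ C₀ := by linarith
  have hCpos : (0:ℝ) < (4 * Real.pi^2 * C₀ + 9) * 2 ^ (2*β) := by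
    have h4 : (0:ℝ) ≤ 4 * Real.pi^2 * C₀ :=
      mul_nonneg (mul_nonneg (by norm_num) (sq_nonneg Real.pi)) hC0nn
    have := Real.rpow_pos_of_pos (by norm_num : (0:ℝ) < 2) (2*β)
    nlinarith
  refine ⟨1, (4 * Real.pi^2 * C₀ + 9) * 2 ^ (2*β), one_pos, hCpos, fun j => ?_⟩
  set m := |(j:ℝ)| with hmdef
  have hm0 : 0 ≤ m := abs_nonneg _
  set L := Real.log (Real.exp 1 + m) with hLdef
  have hL1 : 1 ≤ L := by
    rw [hLdef]
    calc (1:ℝ) = Real.log (Real.exp 1) := (Real.log_exp 1).symm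
      _ ≤ _ := Real.log_le_log (Real.exp_pos 1) (by linarith)
  have hLpow0 : (0:ℝ) ≤ L ^ (2*β) := Real.rpow_nonneg (by linarith) _
  have hLpow1 : (1:ℝ) ≤ L ^ (2*β) := by
    calc (1:ℝ) = L ^ (0:ℝ) := (Real.rpow_zero L).symm
      _ ≤ L ^ (2*β) := Real.rpow_le_rpow_of_exponent_le hL1 hβ2
  have h2pow1 : (1:ℝ) ≤ 2 ^ (2*β) := by
    calc (1:ℝ) = (2:ℝ) ^ (0:ℝ) := (Real.rpow_zero 2).symm
      _ ≤ _ := Real.rpow_le_rpow_of_exponent_le (by norm_num) hβ2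
  have hD : ∀ x : ℝ, x / ((1 + m)⁻¹ * L ^ (-(2*β))) = x * ((1 + m) * L ^ (2*β)) := by
    intro x
    rw [Real.rpow_neg (by linarith), ← mul_inv, div_eq_mul_inv, inv_inv]
  have hFint : (∫ h in Set.Ioo (0 : ℝ) 1, ((1 - Real.log h) ^ (2 * β) / h ^ 2) *
      (‖Complex.exp (2 * Real.pi * Complex.I * (((j : ℝ) * h : ℝ) : ℂ)) - 1‖) ^ 2)
      = ∫ h in Set.Ioo (0:ℝ) 1, Ff β j h := rfl
  rw [hFint, hD, hD, one_mul]
  rcases eq_or_ne j 0 with rfl | hj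
  · have hF0 : ∀ h : ℝ, Ff β 0 h = 0 := by
      intro h
      rw [Ff]
      simp
    have hI0 : (∫ h in Set.Ioo (0:ℝ) 1, Ff β 0 h) = 0 := by
      simp only [hF0, integral_zero]
    rw [hI0]
    have hm00 : m = 0 := by simp [hmdef]
    have hL0 : L = 1 := by rw [hLdef, hm00, add_zero, Real.log_exp]
    rw [hm00, hL0, Real.one_rpow]
    norm_num
    have h9 : (1:ℝ) ≤ 4*Real.pi^2*C₀+9 := by
      nlinarith [mul_nonneg (sq_nonneg Real.pi) hC0nn]
    nlinarith [mul_nonneg (by linarith : (0:ℝ) ≤ 4*Real.pi^2*C₀+9-1)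
      (by linarith : (0:ℝ) ≤ (2:ℝ)^(2*β)-1)]
  · have hm1 : 1 ≤ m := by
      have h1 : (1:ℤ) ≤ |j| := Int.one_le_abs hj
      have : ((1:ℤ):ℝ) ≤ ((|j|:ℤ):ℝ) := by exact_mod_cast h1
      rw [hmdef, ← Int.cast_abs]
      exact_mod_cast this
    constructor
    · exact lower_est β C₀ hβ2 hC0nn hC0 j hj
    · have hup := upper_est β C₀ hβ2 hC0nn hC0 j hj
      have h1le : (1:ℝ) ≤ m * L ^ (2*β) := by nlinarith
      have hmono1 : m * L ^ (2*β) ≤ (1 + m) * L ^ (2*β) := by nlinarith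
      have h4 : (0:ℝ) ≤ 4 * Real.pi^2 * C₀ + 8 := by
        have : (0:ℝ) ≤ 4 * Real.pi^2 * C₀ :=
          mul_nonneg (mul_nonneg (by norm_num) (sq_nonneg Real.pi)) hC0nn
        linarith
    -- 1 + I ≤ m L + (4π²C+8) 2^{2β} m L ≤ 2^{2β}(1+m)L + (4π²C+8)2^{2β}(1+m)L
      calc 1 + (∫ h in Set.Ioo (0:ℝ) 1, Ff β j h)
          ≤ m * L ^ (2*β) + (4 * Real.pi^2 * C₀ + 8) * 2 ^ (2*β) * (m * L ^ (2*β)) := by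
            have := hup
            rw [← hmdef, ← hLdef] at this
            linarith
        _ ≤ 2 ^ (2*β) * ((1 + m) * L ^ (2*β))
            + (4 * Real.pi^2 * C₀ + 8) * 2 ^ (2*β) * ((1 + m) * L ^ (2*β)) := by
            have t1 : m * L ^ (2*β) ≤ 2 ^ (2*β) * ((1 + m) * L ^ (2*β)) := by
              nlinarith
            have t2 : (4 * Real.pi^2 * C₀ + 8) * 2 ^ (2*β) * (m * L ^ (2*β))
                ≤ (4 * Real.pi^2 * C₀ + 8) * 2 ^ (2*β) * ((1 + m) * L ^ (2*β)) := by
              apply mul_le_mul_of_nonneg_left hmono1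
              positivity
            linarith
        _ = (4 * Real.pi^2 * C₀ + 9) * 2 ^ (2*β) * ((1 + m) * L ^ (2*β)) := by ring
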